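/- For every function f : ℝ^r → ℝ of class C², lim_{N→∞} sup_{p ∈ K_N} | N·(T_N f(p) − f(p)) − G_B f(p) | = 0. -/

import Mathlib

open scoped BigOperators NNReal
open Finset MeasureTheory

noncomputable section

/-- A Q-matrix: nonnegative off-diagonal entries, rows summing to zero. -/
def IsQMatrix {r : ℕ} (M : Matrix (Fin r) (Fin r) ℝ) : Prop :=
  (∀ i j, i ≠ j → 0 ≤ M i j) ∧ ∀ i, ∑ j, M i j = 0

/-- A stochastic matrix: nonnegative entries, rows summing to one. -/
def IsStochastic {r : ℕ} (M : Matrix (Fin r) (Fin r) ℝ) : Prop :=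
  (∀ i j, 0 ≤ M i j) ∧ ∀ i, ∑ j, M i j = 1

/-- Frobenius norm of an `r×r` real matrix. -/
def frobNorm {r : ℕ} (M : Matrix (Fin r) (Fin r) ℝ) : ℝ :=
  Real.sqrt (∑ i, ∑ j, (M i j) ^ 2)

/-- The metric `d_U(x,y) = ∫₀^∞ e^{-u} sup_{0≤t≤u} (‖x(t)−y(t)‖ ∧ 1) du` on
matrix-valued paths. -/
def dU {r : ℕ} (x y : ℝ → Matrix (Fin r) (Fin r) ℝ) : ℝ :=
  ∫ u in Set.Ioi (0 : ℝ),
    Real.exp (-u) * sSup ((fun t => min (frobNorm (x t - y t)) 1) '' Set.Icc 0 u)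

/-- Multinomial probability weight `(∑β)!/∏ β_j! · ∏ p_j^{β_j}`. -/
def multinomialWeight {r : ℕ} (p : Fin r → ℝ) (β : Fin r → ℕ) : ℝ :=
  (Nat.multinomial Finset.univ β : ℝ) * ∏ j, p j ^ β j

/-- The internal-dynamics transition operator: `SOp N P f n = S_{N} f(n/N)`, where each
of the `n i` agents of type `i` independently moves to type `j` with probability `P i j`,
the sum running over all arrays `ξ ∈ ℤ₊^{r×r}` whose `i`-th row sums to `n i`. -/
def SOp {r : ℕ} (N : ℕ) (P : Matrix (Fin r) (Fin r) ℝ) (f : (Fin r → ℝ) → ℝ)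
    (n : Fin r → ℕ) : ℝ :=
  ∑ ξ ∈ Fintype.piFinset fun i => Finset.Nat.antidiagonalTuple r (n i),
    (∏ i, multinomialWeight (P i) (ξ i)) * f fun j => ((∑ i, ξ i j : ℕ) : ℝ) / N

/-- The multinomial-sampling operator `T_N f(p) = E[f(M/N)]`, `M ~ multinomial(N,p)`. -/
def TOp {r : ℕ} (N : ℕ) (f : (Fin r → ℝ) → ℝ) (p : Fin r → ℝ) : ℝ :=
  ∑ α ∈ Finset.Nat.antidiagonalTuple r N,
    multinomialWeight p α * f fun i => (α i : ℝ) / N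

/-- One-step operator of internal dynamics followed by multinomial sampling:
`U_{N,k} f = S_{N,k}(T_N f)`. -/
def UOp {r : ℕ} (N : ℕ) (P : Matrix (Fin r) (Fin r) ℝ) (f : (Fin r → ℝ) → ℝ)
    (n : Fin r → ℕ) : ℝ :=
  SOp N P (TOp N f) n

/-- The first-order generator `G_A(t) f(p) = ∑_{i,j} pᵢ aᵢⱼ(t) ∂f/∂xⱼ(p)`,
here taking the matrix `A(t)` as argument. -/
def GA {r : ℕ} (M : Matrix (Fin r) (Fin r) ℝ) (f : (Fin r → ℝ) → ℝ) (p : Fin r → ℝ) : ℝ :=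
  ∑ i, ∑ j, p i * M i j * fderiv ℝ f p (Pi.single j 1)

/-- The Wright–Fisher generator
`G_B f(p) = (1/2) ∑_{i,j} pᵢ(δᵢⱼ − pⱼ) ∂²f/∂xᵢ∂xⱼ(p)`. -/
def GB {r : ℕ} (f : (Fin r → ℝ) → ℝ) (p : Fin r → ℝ) : ℝ :=
  (1 / 2) * ∑ i, ∑ j,
    p i * ((if i = j then (1 : ℝ) else 0) - p j) *
      fderiv ℝ (fun x => fderiv ℝ f x (Pi.single j 1)) p (Pi.single i 1)


namespace WFAux

variable {r : ℕ}

/-- add one to coordinate `i` -/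
def addE (i : Fin r) (β : Fin r → ℕ) : Fin r → ℕ := fun j => if j = i then β j + 1 else β j

def subE (i : Fin r) (β : Fin r → ℕ) : Fin r → ℕ := fun j => if j = i then β j - 1 else β j

lemma sum_addE (i : Fin r) (β : Fin r → ℕ) : ∑ j, addE i β j = (∑ j, β j) + 1 := by
  unfold addE
  rw [Finset.sum_congr rfl (fun j _ => show (if j = i then β j + 1 else β j)
      = β j + (if j = i then 1 else 0) by split <;> simp)]
  rw [Finset.sum_add_distrib, Finset.sum_ite_eq' Finset.univ i (fun _ => 1)]
  simp

lemma prod_pow_addE (p : Fin r → ℝ) (i : Fin r) (β : Fin r → ℕ) :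
    ∏ j, p j ^ addE i β j = p i * ∏ j, p j ^ β j := by
  unfold addE
  rw [Finset.prod_congr rfl (fun j _ => show p j ^ (if j = i then β j + 1 else β j)
      = p j ^ β j * (if j = i then p j else 1) by split <;> simp [pow_succ])]
  rw [Finset.prod_mul_distrib, Finset.prod_ite_eq' Finset.univ i (fun j => p j)]
  simp [mul_comm]

lemma prod_factorial_addE (i : Fin r) (β : Fin r → ℕ) :
    ∏ j, (addE i β j).factorial = (β i + 1) * ∏ j, (β j).factorial := by
  unfold addE
  rw [Finset.prod_congr rfl (fun j _ => show (if j = i then β j + 1 else β j).factorial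
      = (β j).factorial * (if j = i then β j + 1 else 1) by
        split <;> simp [Nat.factorial_succ, mul_comm])]
  rw [Finset.prod_mul_distrib, Finset.prod_ite_eq' Finset.univ i (fun j => β j + 1)]
  simp [mul_comm]

lemma multinomial_addE (i : Fin r) (β : Fin r → ℕ) :
    (β i + 1) * Nat.multinomial Finset.univ (addE i β)
      = ((∑ j, β j) + 1) * Nat.multinomial Finset.univ β := by
  have hpos : 0 < ∏ j, (β j).factorial :=
    Finset.prod_pos fun j _ => Nat.factorial_pos _
  apply Nat.eq_of_mul_eq_mul_left hpos
  calc (∏ j, (β j).factorial) * ((β i + 1) * Nat.multinomial Finset.univ (addE i β))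
      = (∏ j, (addE i β j).factorial) * Nat.multinomial Finset.univ (addE i β) := by
        rw [prod_factorial_addE]; ring
    _ = (∑ j, addE i β j).factorial := Nat.multinomial_spec _ _
    _ = ((∑ j, β j) + 1).factorial := by rw [sum_addE]
    _ = ((∑ j, β j) + 1) * (∑ j, β j).factorial := Nat.factorial_succ _
    _ = ((∑ j, β j) + 1) * ((∏ j, (β j).factorial) * Nat.multinomial Finset.univ β) := by
        rw [Nat.multinomial_spec]
    _ = (∏ j, (β j).factorial) * (((∑ j, β j) + 1) * Nat.multinomial Finset.univ β) := by ring

lemma weight_addE (p : Fin r → ℝ) (i : Fin r) {N : ℕ} {β : Fin r → ℕ}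
    (hβ : ∑ j, β j = N) :
    ((β i : ℝ) + 1) * multinomialWeight p (addE i β)
      = ((N : ℝ) + 1) * p i * multinomialWeight p β := by
  unfold multinomialWeight
  rw [prod_pow_addE]
  have h := multinomial_addE i β
  rw [hβ] at h
  have h' : ((β i : ℝ) + 1) * (Nat.multinomial Finset.univ (addE i β) : ℝ)
      = ((N : ℝ) + 1) * (Nat.multinomial Finset.univ β : ℝ) := by
    exact_mod_cast congrArg (Nat.cast (R := ℝ)) h
  calc ((β i : ℝ) + 1) * ((Nat.multinomial Finset.univ (addE i β) : ℝ)
        * (p i * ∏ j, p j ^ β j))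
      = (((β i : ℝ) + 1) * (Nat.multinomial Finset.univ (addE i β) : ℝ))
        * (p i * ∏ j, p j ^ β j) := by ring
    _ = (((N : ℝ) + 1) * (Nat.multinomial Finset.univ β : ℝ)) * (p i * ∏ j, p j ^ β j) := by
        rw [h']
    _ = ((N : ℝ) + 1) * p i * ((Nat.multinomial Finset.univ β : ℝ) * ∏ j, p j ^ β j) := by ring

/-- Expectation of `g` under the multinomial(N,p) distribution. -/
def Ex (r N : ℕ) (p : Fin r → ℝ) (g : (Fin r → ℕ) → ℝ) : ℝ :=
  ∑ β ∈ Finset.Nat.antidiagonalTuple r N, multinomialWeight p β * g β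

lemma Ex_step (N : ℕ) (p : Fin r → ℝ) (i : Fin r) (g : (Fin r → ℕ) → ℝ) :
    Ex r (N + 1) p (fun β => (β i : ℝ) * g β)
      = ((N : ℝ) + 1) * p i * Ex r N p (fun β => g (addE i β)) := by
  classical
  unfold Ex
  rw [Finset.mul_sum]
  rw [← Finset.sum_filter_of_ne (p := fun β => β i ≠ 0)
    (fun β _ hne => by
      intro h0
      apply hne
      simp [h0])]
  symm
  refine Finset.sum_nbij' (i := addE i) (j := subE i) ?_ ?_ ?_ ?_ ?_
  · intro β hβ
    rw [Finset.Nat.mem_antidiagonalTuple] at hβ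
    rw [Finset.mem_filter, Finset.Nat.mem_antidiagonalTuple]
    constructor
    · rw [sum_addE, hβ]
    · show addE i β i ≠ 0
      unfold addE
      simp
  · intro γ hγ
    rw [Finset.mem_filter, Finset.Nat.mem_antidiagonalTuple] at hγ
    obtain ⟨hsum, hne⟩ := hγ
    rw [Finset.Nat.mem_antidiagonalTuple]
    have hγi : 1 ≤ γ i := Nat.one_le_iff_ne_zero.2 hne
    unfold subE
    have h1 : ∑ j, (if j = i then γ j - 1 else γ j)
        = (γ i - 1) + ∑ j ∈ Finset.univ.erase i, γ j := by
      rw [← Finset.add_sum_erase Finset.univ _ (Finset.mem_univ i)]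
      simp only [if_pos rfl]
      congr 1
      exact Finset.sum_congr rfl (fun j hj => by
        rw [if_neg (Finset.mem_erase.1 hj).1])
    have h2 : γ i + ∑ j ∈ Finset.univ.erase i, γ j = N + 1 := by
      rw [Finset.add_sum_erase Finset.univ _ (Finset.mem_univ i)]
      exact hsum
    omega
  · intro β hβ
    funext j
    unfold subE addE
    by_cases h : j = i <;> simp [h]
  · intro γ hγ
    rw [Finset.mem_filter] at hγ
    have hγi : 1 ≤ γ i := Nat.one_le_iff_ne_zero.2 hγ.2
    funext j
    unfold subE addE
    by_cases h : j = i
    · subst h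
      simp only [eq_self_iff_true, if_true]
      omega
    · simp [h]
  · intro β hβ
    rw [Finset.Nat.mem_antidiagonalTuple] at hβ
    have hw := weight_addE p i hβ
    have haddi : ((addE i β i : ℕ) : ℝ) = (β i : ℝ) + 1 := by
      unfold addE; simp
    calc ((N : ℝ) + 1) * p i * (multinomialWeight p β * g (addE i β))
        = (((β i : ℝ) + 1) * multinomialWeight p (addE i β)) * g (addE i β) := by
          rw [hw]; ring
      _ = multinomialWeight p (addE i β) * (((addE i β i : ℕ) : ℝ) * g (addE i β)) := by
          rw [haddi]; ring

variable {N : ℕ} {p : Fin r → ℝ}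

lemma Ex_congr {g h : (Fin r → ℕ) → ℝ} (H : ∀ β, g β = h β) :
    Ex r N p g = Ex r N p h := by
  unfold Ex; exact Finset.sum_congr rfl fun β _ => by rw [H]

lemma Ex_add (g h : (Fin r → ℕ) → ℝ) :
    Ex r N p (fun β => g β + h β) = Ex r N p g + Ex r N p h := by
  unfold Ex; rw [← Finset.sum_add_distrib]; exact Finset.sum_congr rfl fun β _ => by ring

lemma Ex_smul (c : ℝ) (g : (Fin r → ℕ) → ℝ) :
    Ex r N p (fun β => c * g β) = c * Ex r N p g := by
  unfold Ex; rw [Finset.mul_sum]; exact Finset.sum_congr rfl fun β _ => by ring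

lemma Ex_mul_const (g : (Fin r → ℕ) → ℝ) (c : ℝ) :
    Ex r N p (fun β => g β * c) = Ex r N p g * c := by
  unfold Ex; rw [Finset.sum_mul]; exact Finset.sum_congr rfl fun β _ => by ring

lemma Ex_sum {ι : Type*} (s : Finset ι) (g : ι → (Fin r → ℕ) → ℝ) :
    Ex r N p (fun β => ∑ i ∈ s, g i β) = ∑ i ∈ s, Ex r N p (g i) := by
  unfold Ex
  rw [Finset.sum_congr rfl fun β _ => Finset.mul_sum _ _ _]
  exact Finset.sum_comm

lemma Ex_zero (g : (Fin r → ℕ) → ℝ) : Ex r 0 p g = multinomialWeight p 0 * g 0 := by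
  unfold Ex
  rw [Finset.Nat.antidiagonalTuple_zero_right, Finset.sum_singleton]

lemma weight_zero_tuple : multinomialWeight p (0 : Fin r → ℕ) = 1 := by
  unfold multinomialWeight
  have h := Nat.multinomial_spec Finset.univ (0 : Fin r → ℕ)
  simp only [Pi.zero_apply, Nat.factorial_zero, Finset.prod_const_one, one_mul,
    Finset.sum_const_zero] at h
  simp [h]

lemma weight_nonneg (hp : ∀ i, 0 ≤ p i) (β : Fin r → ℕ) : 0 ≤ multinomialWeight p β :=
  mul_nonneg (Nat.cast_nonneg _)
    (Finset.prod_nonneg fun j _ => pow_nonneg (hp j) _)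

lemma Eone (hp : ∑ j, p j = 1) : ∀ N, Ex r N p (fun _ => 1) = 1 := by
  intro N
  induction N with
  | zero => rw [Ex_zero, weight_zero_tuple]; ring
  | succ N ih =>
    have hcancel : ((N : ℝ) + 1) ≠ 0 := by positivity
    apply mul_left_cancel₀ hcancel
    calc ((N : ℝ) + 1) * Ex r (N + 1) p (fun _ => 1)
        = Ex r (N + 1) p (fun β => ∑ i, (β i : ℝ)) := by
          unfold Ex
          rw [Finset.mul_sum]
          refine Finset.sum_congr rfl fun β hβ => ?_
          rw [Finset.Nat.mem_antidiagonalTuple] at hβ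
          have h : ∑ i, (β i : ℝ) = (N : ℝ) + 1 := by
            rw [← Nat.cast_sum, hβ]; push_cast; ring
          show ((N : ℝ) + 1) * (multinomialWeight p β * 1)
              = multinomialWeight p β * ∑ i, (β i : ℝ)
          rw [h]; ring
      _ = ∑ i, Ex r (N + 1) p (fun β => (β i : ℝ) * 1) := by
          unfold Ex
          rw [Finset.sum_comm]
          exact Finset.sum_congr rfl fun β _ => by rw [Finset.mul_sum]; simp
      _ = ∑ i, ((N : ℝ) + 1) * p i * Ex r N p (fun _ => 1) := by
          exact Finset.sum_congr rfl fun i _ => Ex_step N p i (fun _ => 1)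
      _ = ((N : ℝ) + 1) * 1 := by
          rw [ih, ← Finset.sum_mul]
          rw [show ∑ i, ((N:ℝ)+1) * p i = ((N:ℝ)+1) * ∑ i, p i from by
            rw [Finset.mul_sum]]
          rw [hp]; ring
      _ = ((N : ℝ) + 1) * 1 := rfl

lemma Ex_const (hp : ∑ j, p j = 1) (c : ℝ) : Ex r N p (fun _ => c) = c := by
  have h : Ex r N p (fun _ => c * 1) = c * Ex r N p (fun _ => 1) := Ex_smul c (fun _ => 1)
  simp only [mul_one] at h
  rw [h, Eone hp]; ring

lemma addE_self_cast (i : Fin r) (β : Fin r → ℕ) :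
    ((addE i β i : ℕ) : ℝ) = (β i : ℝ) + 1 := by unfold addE; simp

lemma addE_cast (i j : Fin r) (β : Fin r → ℕ) :
    ((addE i β j : ℕ) : ℝ) = (β j : ℝ) + (if i = j then 1 else 0) := by
  unfold addE
  by_cases h : j = i
  · subst h; simp
  · simp [h, Ne.symm h]

lemma Emom1 (hp : ∑ j, p j = 1) (i : Fin r) :
    ∀ N, Ex r N p (fun β => (β i : ℝ)) = N * p i := by
  intro N
  cases N with
  | zero => rw [Ex_zero]; simp
  | succ N =>
    have h := Ex_step N p i (fun _ => 1)
    simp only [mul_one] at h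
    rw [h, Eone hp]
    push_cast; ring

lemma Emom2 (hp : ∑ j, p j = 1) (i j : Fin r) (N : ℕ) :
    Ex r N p (fun β => (β i : ℝ) * (β j : ℝ))
      = N * p i * (((N : ℝ) - 1) * p j + if i = j then 1 else 0) := by
  cases N with
  | zero => rw [Ex_zero]; simp
  | succ N =>
    have h := Ex_step N p i (fun β => (β j : ℝ))
    rw [h]
    have h2 : Ex r N p (fun β => ((addE i β j : ℕ) : ℝ))
        = Ex r N p (fun β => (β j : ℝ) + (if i = j then 1 else 0)) :=
      Ex_congr fun β => addE_cast i j β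
    rw [h2, Ex_add, Emom1 hp, Ex_const hp]
    push_cast; ring

lemma Emom3 (hp : ∑ j, p j = 1) (i : Fin r) (N : ℕ) :
    Ex r N p (fun β => (β i : ℝ) ^ 3)
      = N * ((N:ℝ) - 1) * ((N:ℝ) - 2) * p i ^ 3 + 3 * N * ((N:ℝ) - 1) * p i ^ 2 + N * p i := by
  cases N with
  | zero => rw [Ex_zero]; simp
  | succ N =>
    have h0 : Ex r (N + 1) p (fun β => (β i : ℝ) ^ 3)
        = Ex r (N + 1) p (fun β => (β i : ℝ) * ((β i : ℝ) ^ 2)) :=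
      Ex_congr fun β => by ring
    rw [h0, Ex_step N p i (fun β => (β i : ℝ) ^ 2)]
    have h2 : Ex r N p (fun β => ((addE i β i : ℕ) : ℝ) ^ 2)
        = Ex r N p (fun β => (β i : ℝ) * (β i : ℝ) + (2 * (β i : ℝ) + 1)) :=
      Ex_congr fun β => by rw [addE_self_cast]; ring
    rw [h2, Ex_add, Ex_add, Ex_smul, Emom2 hp, Emom1 hp, Eone hp]
    simp only [eq_self_iff_true, if_true]
    push_cast; ring

lemma Emom4 (hp : ∑ j, p j = 1) (i : Fin r) (N : ℕ) :
    Ex r N p (fun β => (β i : ℝ) ^ 4)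
      = N * ((N:ℝ) - 1) * ((N:ℝ) - 2) * ((N:ℝ) - 3) * p i ^ 4
        + 6 * N * ((N:ℝ) - 1) * ((N:ℝ) - 2) * p i ^ 3
        + 7 * N * ((N:ℝ) - 1) * p i ^ 2 + N * p i := by
  cases N with
  | zero => rw [Ex_zero]; simp
  | succ N =>
    have h0 : Ex r (N + 1) p (fun β => (β i : ℝ) ^ 4)
        = Ex r (N + 1) p (fun β => (β i : ℝ) * ((β i : ℝ) ^ 3)) :=
      Ex_congr fun β => by ring
    rw [h0, Ex_step N p i (fun β => (β i : ℝ) ^ 3)]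
    have h2 : Ex r N p (fun β => ((addE i β i : ℕ) : ℝ) ^ 3)
        = Ex r N p (fun β => (β i : ℝ) ^ 3 + (3 * ((β i : ℝ) * (β i : ℝ))
            + (3 * (β i : ℝ) + 1))) :=
      Ex_congr fun β => by rw [addE_self_cast]; ring
    rw [h2, Ex_add, Ex_add, Ex_add, Ex_smul, Ex_smul, Emom3 hp, Emom2 hp, Emom1 hp, Eone hp]
    simp only [eq_self_iff_true, if_true]
    push_cast; ring

lemma Ecent2 (hp : ∑ j, p j = 1) (i j : Fin r) (N : ℕ) :
    Ex r N p (fun β => ((β i : ℝ) - N * p i) * ((β j : ℝ) - N * p j))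
      = N * p i * ((if i = j then 1 else 0) - p j) := by
  have h0 : Ex r N p (fun β => ((β i : ℝ) - N * p i) * ((β j : ℝ) - N * p j))
      = Ex r N p (fun β => (β i : ℝ) * (β j : ℝ)
          + ((-(N * p j)) * (β i : ℝ) + ((-(N * p i)) * (β j : ℝ) + N * p i * (N * p j)))) :=
    Ex_congr fun β => by ring
  rw [h0, Ex_add, Ex_add, Ex_add, Ex_smul, Ex_smul, Emom2 hp, Emom1 hp, Emom1 hp,
    Ex_const hp]
  ring

lemma Ecent4 (hp : ∑ j, p j = 1) (i : Fin r) (N : ℕ) :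
    Ex r N p (fun β => ((β i : ℝ) - N * p i) ^ 4)
      = Ex r N p (fun β => (β i : ℝ) ^ 4
          + ((-(4 * (N * p i))) * ((β i : ℝ) ^ 3)
          + ((6 * (N * p i) ^ 2) * ((β i : ℝ) * (β i : ℝ))
          + ((-(4 * (N * p i) ^ 3)) * (β i : ℝ) + (N * p i) ^ 4)))) :=
  Ex_congr fun β => by ring

lemma Ecent4_le (hp : ∑ j, p j = 1) (i : Fin r) (N : ℕ)
    (hp0 : 0 ≤ p i) (hp1 : p i ≤ 1) :
    Ex r N p (fun β => ((β i : ℝ) - N * p i) ^ 4) ≤ 3 * (N : ℝ) ^ 2 := by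
  rw [Ecent4 hp, Ex_add, Ex_add, Ex_add, Ex_add, Ex_smul, Ex_smul, Ex_smul,
    Emom4 hp, Emom3 hp, Emom2 hp, Emom1 hp, Ex_const hp]
  have hN : (0 : ℝ) ≤ N := Nat.cast_nonneg N
  simp only [eq_self_iff_true, if_true]
  set n : ℝ := (N : ℝ) with hn
  set q : ℝ := p i with hq
  have hEq : n * (n - 1) * (n - 2) * (n - 3) * q ^ 4 + 6 * n * (n - 1) * (n - 2) * q ^ 3
        + 7 * n * (n - 1) * q ^ 2 + n * q
      + (-(4 * (n * q)) * (n * (n - 1) * (n - 2) * q ^ 3 + 3 * n * (n - 1) * q ^ 2 + n * q)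
        + (6 * (n * q) ^ 2 * (n * q * ((n - 1) * q + 1))
          + (-(4 * (n * q) ^ 3) * (n * q) + (n * q) ^ 4)))
      = n * (q * (1 - q)) + 3 * n * (n - 2) * (q * (1 - q)) ^ 2 := by ring
  rw [hEq]
  have hu0 : 0 ≤ q * (1 - q) := mul_nonneg hp0 (by linarith)
  have hu4 : q * (1 - q) ≤ 1 / 4 := by nlinarith [sq_nonneg (1 - 2 * q)]
  rcases Nat.eq_zero_or_pos N with h0 | h1
  · subst h0
    simp only [hn, Nat.cast_zero] at *
    nlinarith
  · have hN1 : (1 : ℝ) ≤ n := by rw [hn]; exact_mod_cast h1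
    have hsq : (q * (1 - q)) ^ 2 ≤ (1 / 4) ^ 2 := by
      apply pow_le_pow_left₀ hu0 hu4
    nlinarith [mul_le_mul_of_nonneg_left hu4 hN,
      mul_le_mul_of_nonneg_left hsq (mul_nonneg hN hN),
      mul_nonneg (mul_nonneg hN hu0) hu0, sq_nonneg n]

lemma taylor2 {r : ℕ} {f : (Fin r → ℝ) → ℝ} (hf : ContDiff ℝ 2 f) (a v : Fin r → ℝ) {M : ℝ}
    (hM : ∀ t ∈ Set.Icc (0:ℝ) 1,
      ‖fderiv ℝ (fderiv ℝ f) (a + t • v) - fderiv ℝ (fderiv ℝ f) a‖ ≤ M) :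
    |f (a + v) - f a - fderiv ℝ f a v
      - (1/2) * ((fderiv ℝ (fderiv ℝ f) a) v v)| ≤ M * ‖v‖^2 := by
  set F1 := fderiv ℝ f with hF1
  set F2 := fderiv ℝ F1 with hF2
  have hd1 : Differentiable ℝ f := hf.differentiable (by norm_num)
  have hc1 : ContDiff ℝ 1 F1 := hf.fderiv_right (by norm_num)
  have hd2 : Differentiable ℝ F1 := hc1.differentiable one_ne_zero
  have hM0 : 0 ≤ M := by
    have h := hM 0 (by constructor <;> norm_num)
    exact le_trans (norm_nonneg (F2 (a + (0:ℝ) • v) - F2 a)) h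
  have hline : ∀ t : ℝ, HasDerivAt (fun s : ℝ => a + s • v) v t := by
    intro t
    have h := (hasDerivAt_id t).smul_const v
    simpa using h.const_add a
  have hg1 : ∀ t : ℝ, HasDerivAt (fun s => F1 (a + s • v) v) ((F2 (a + t • v) v) v) t := by
    intro t
    have hc : HasDerivAt (fun s => F1 (a + s • v)) (F2 (a + t • v) v) t :=
      (hd2 (a + t • v)).hasFDerivAt.comp_hasDerivAt t (hline t)
    have h := hc.clm_apply (hasDerivAt_const t v)
    simpa using h
  set w2 : ℝ := (F2 a) v v with hw2
  set ψ : ℝ → ℝ := fun s => F1 (a + s • v) v - s * w2 with hψdef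
  have hψ0 : ψ 0 = F1 a v := by simp [hψdef]
  have hψd : ∀ t : ℝ, HasDerivAt ψ ((F2 (a + t • v) v) v - w2) t := by
    intro t
    have h := (hg1 t).sub ((hasDerivAt_id t).mul_const w2)
    simp only [one_mul] at h
    exact h
  have hbound : ∀ t ∈ Set.Icc (0:ℝ) 1, ‖(F2 (a + t • v) v) v - w2‖ ≤ M * ‖v‖^2 := by
    intro t ht
    have h1 : (F2 (a + t • v) v) v - w2 = ((F2 (a + t • v) - F2 a) v) v := by
      simp [hw2, ContinuousLinearMap.sub_apply]
    rw [h1]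
    calc ‖((F2 (a + t • v) - F2 a) v) v‖
        ≤ ‖(F2 (a + t • v) - F2 a) v‖ * ‖v‖ := ContinuousLinearMap.le_opNorm _ v
      _ ≤ (‖F2 (a + t • v) - F2 a‖ * ‖v‖) * ‖v‖ :=
          mul_le_mul_of_nonneg_right
            (ContinuousLinearMap.le_opNorm _ v) (norm_nonneg v)
      _ ≤ (M * ‖v‖) * ‖v‖ :=
          mul_le_mul_of_nonneg_right
            (mul_le_mul_of_nonneg_right (hM t ht) (norm_nonneg v)) (norm_nonneg v)
      _ = M * ‖v‖^2 := by ring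
  have hψest : ∀ t ∈ Set.Icc (0:ℝ) 1, ‖ψ t - ψ 0‖ ≤ M * ‖v‖^2 * (t - 0) := by
    apply norm_image_sub_le_of_norm_deriv_le_segment'
      (f' := fun t => (F2 (a + t • v) v) v - w2)
    · exact fun t ht => (hψd t).hasDerivWithinAt
    · exact fun t ht => hbound t (Set.Ico_subset_Icc_self ht)
  set φ : ℝ → ℝ := fun s => f (a + s • v) - f a - s * (F1 a v) - s^2/2 * w2 with hφdef
  have hφd : ∀ t : ℝ, HasDerivAt φ (ψ t - ψ 0) t := by
    intro t
    have hg : HasDerivAt (fun s => f (a + s • v)) (F1 (a + t • v) v) t :=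
      (hd1 (a + t • v)).hasFDerivAt.comp_hasDerivAt t (hline t)
    have hsq : HasDerivAt (fun s : ℝ => s^2/2 * w2) (t * w2) t := by
      have h := ((hasDerivAt_pow 2 t).div_const 2).mul_const w2
      norm_num at h
      convert h using 1
    have h := ((hg.sub_const (f a)).sub ((hasDerivAt_id t).mul_const (F1 a v))).sub hsq
    rw [hψ0]
    simp only [hψdef]
    rw [show F1 (a + t • v) v - t * w2 - F1 a v = F1 (a + t • v) v - 1 * F1 a v - t * w2 by ring]
    exact h
  have hφest : ∀ t ∈ Set.Icc (0:ℝ) 1, ‖φ t - φ 0‖ ≤ M * ‖v‖^2 * (t - 0) := by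
    apply norm_image_sub_le_of_norm_deriv_le_segment' (f' := fun t => ψ t - ψ 0)
    · exact fun t ht => (hφd t).hasDerivWithinAt
    · intro t ht
      have h := hψest t (Set.Ico_subset_Icc_self ht)
      have ht1 : t - 0 ≤ 1 := by linarith [ht.2]
      have hMv : 0 ≤ M * ‖v‖^2 := mul_nonneg hM0 (by positivity)
      calc ‖ψ t - ψ 0‖ ≤ M * ‖v‖^2 * (t - 0) := h
        _ ≤ M * ‖v‖^2 * 1 := mul_le_mul_of_nonneg_left ht1 hMv
        _ = M * ‖v‖^2 := by ring
  have h1 := hφest 1 (by constructor <;> norm_num)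
  have hφ0 : φ 0 = 0 := by simp [hφdef]
  have hφ1 : φ 1 = f (a + v) - f a - F1 a v - (1/2) * w2 := by
    simp only [hφdef, one_smul, one_pow]
    ring
  rw [hφ0, sub_zero, hφ1] at h1
  simpa using h1

lemma pi_decomp (x : Fin r → ℝ) :
    x = ∑ i, x i • (Pi.single i (1:ℝ) : Fin r → ℝ) := by
  funext j
  rw [Finset.sum_apply]
  rw [Finset.sum_congr rfl (fun i _ =>
      show (x i • (Pi.single i (1:ℝ) : Fin r → ℝ)) j
      = if j = i then x i else 0 by
        rw [Pi.smul_apply, Pi.single_apply]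
        split <;> simp)]
  rw [Finset.sum_ite_eq Finset.univ j (fun i => x i)]
  simp

lemma clm_expand {E : Type*} [NormedAddCommGroup E] [NormedSpace ℝ E]
    (L : (Fin r → ℝ) →L[ℝ] E) (x : Fin r → ℝ) :
    L x = ∑ i, x i • L (Pi.single i 1) := by
  conv_lhs => rw [pi_decomp x]
  rw [map_sum]
  exact Finset.sum_congr rfl fun i _ => by rw [ContinuousLinearMap.map_smul]

lemma clm2_expand (L : (Fin r → ℝ) →L[ℝ] ((Fin r → ℝ) →L[ℝ] ℝ)) (x : Fin r → ℝ) :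
    L x x = ∑ i, ∑ j, x i * x j * (L (Pi.single i 1) (Pi.single j 1)) := by
  conv_lhs => rw [clm_expand L x]
  rw [ContinuousLinearMap.sum_apply]
  refine Finset.sum_congr rfl fun i _ => ?_
  rw [ContinuousLinearMap.smul_apply]
  rw [show (L (Pi.single i 1)) x = ∑ j, x j * (L (Pi.single i 1) (Pi.single j 1)) from by
    rw [clm_expand (L (Pi.single i 1)) x]
    exact Finset.sum_congr rfl fun j _ => by rw [smul_eq_mul]]
  rw [smul_eq_mul, Finset.mul_sum]
  exact Finset.sum_congr rfl fun j _ => by ring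

lemma fderiv_eval {f : (Fin r → ℝ) → ℝ} (hd2 : Differentiable ℝ (fderiv ℝ f))
    (p u w : Fin r → ℝ) :
    fderiv ℝ (fun x => fderiv ℝ f x w) p u = fderiv ℝ (fderiv ℝ f) p u w := by
  rw [fderiv_clm_apply (hd2 p) (differentiableAt_const w)]
  simp

end WFAux


open WFAux in
theorem multinomial_sampling_generator_convergence
    (r : ℕ) (hr : 2 ≤ r)
    (f : (Fin r → ℝ) → ℝ) (hf : ContDiff ℝ 2 f) :
    ∀ ε > 0, ∃ N₀ : ℕ, ∀ N : ℕ, N₀ ≤ N → 1 ≤ N →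
      ∀ α : Fin r → ℕ, ∑ i, α i = N →
        |(N : ℝ) * (TOp N f (fun i => (α i : ℝ) / N) - f fun i => (α i : ℝ) / N)
          - GB f (fun i => (α i : ℝ) / N)| < ε := by
  classical
  intro ε hε
  have hd1 : Differentiable ℝ f := hf.differentiable (by norm_num)
  have hc1 : ContDiff ℝ 1 (fderiv ℝ f) := hf.fderiv_right (by norm_num)
  have hd2 : Differentiable ℝ (fderiv ℝ f) := hc1.differentiable one_ne_zero
  set F2 := fderiv ℝ (fderiv ℝ f) with hF2def
  have hF2cont : Continuous F2 := hc1.continuous_fderiv one_ne_zero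
  set Q : Set (Fin r → ℝ) := Set.Icc 0 1 with hQdef
  have hQcompact : IsCompact Q := isCompact_Icc
  obtain ⟨C₀, hC₀⟩ := hQcompact.exists_bound_of_continuousOn (f := F2) hF2cont.continuousOn
  set C := max C₀ 0 with hCdef
  have hC : ∀ x ∈ Q, ‖F2 x‖ ≤ C := fun x hx => le_trans (hC₀ x hx) (le_max_left _ _)
  have hC0 : (0:ℝ) ≤ C := le_max_right _ _
  have hUC : UniformContinuousOn F2 Q :=
    hQcompact.uniformContinuousOn_of_continuous hF2cont.continuousOn
  rw [Metric.uniformContinuousOn_iff (f := F2)] at hUC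
  obtain ⟨δ, hδ0, hδ⟩ := hUC (ε/2) (by linarith)
  obtain ⟨N₁, hN₁⟩ := exists_nat_gt ((6*C*(r:ℝ)^2/δ^2) / (ε/2))
  refine ⟨N₁ + 1, fun N hNge hN1 α hα => ?_⟩
  have hNpos : (0:ℝ) < (N:ℝ) := by exact_mod_cast hN1
  have hN0 : (N:ℝ) ≠ 0 := hNpos.ne'
  set p : Fin r → ℝ := fun i => (α i : ℝ) / N with hpdef
  have hp0 : ∀ i, 0 ≤ p i := fun i => div_nonneg (Nat.cast_nonneg _) hNpos.le
  have hp1 : ∑ j, p j = 1 := by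
    simp only [hpdef]
    rw [← Finset.sum_div, show (∑ i, (α i:ℝ)) = (N:ℝ) from by
      rw [← Nat.cast_sum, hα]]
    exact div_self hNpos.ne'
  have hple : ∀ i, p i ≤ 1 := fun i => by
    have hle : α i ≤ N := hα ▸ Finset.single_le_sum (f := fun j => α j)
      (fun _ _ => Nat.zero_le _) (Finset.mem_univ i)
    simp only [hpdef]
    rw [div_le_one hNpos]
    exact_mod_cast hle
  have hpQ : p ∈ Q := by
    rw [hQdef, Set.mem_Icc]
    exact ⟨fun i => hp0 i, fun i => hple i⟩
  set v : (Fin r → ℕ) → (Fin r → ℝ) := fun β i => (β i : ℝ)/N - p i with hvdef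
  -- the generator written with F2
  have hGB : GB f p = (1/2) * ∑ i, ∑ j,
      p i * ((if i = j then (1:ℝ) else 0) - p j) * (F2 p (Pi.single i 1) (Pi.single j 1)) := by
    unfold GB
    congr 1
    refine Finset.sum_congr rfl fun i _ => Finset.sum_congr rfl fun j _ => ?_
    rw [fderiv_eval hd2 p (Pi.single i 1) (Pi.single j 1)]
  -- the Taylor remainder
  set Rm : (Fin r → ℕ) → ℝ := fun β => f (fun i => (β i:ℝ)/N)
    + ((-(f p)) + ((-1) * (fderiv ℝ f p (v β)) + (-(1/2)) * (F2 p (v β) (v β)))) with hRmdef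
  have hT : Ex r N p (fun β => f (fun i => (β i:ℝ)/N)) = TOp N f p := rfl
  have hEv1 : ∀ i, Ex r N p (fun β => (β i:ℝ)/N - p i) = 0 := by
    intro i
    have h : Ex r N p (fun β => (β i:ℝ)/N - p i)
        = Ex r N p (fun β => (1/(N:ℝ)) * (β i:ℝ) + (-(p i))) :=
      Ex_congr fun β => by ring
    rw [h, Ex_add, Ex_smul, Emom1 hp1, Ex_const hp1]
    field_simp
    ring
  have hEv2 : ∀ i j, Ex r N p (fun β => ((β i:ℝ)/N - p i) * ((β j:ℝ)/N - p j))
      = p i * ((if i = j then (1:ℝ) else 0) - p j) / N := by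
    intro i j
    have key : ∀ a b c d : ℝ, (a/(N:ℝ) - b) * (c/(N:ℝ) - d)
        = (1/(N:ℝ)^2) * ((a - N*b) * (c - N*d)) := by
      intro a b c d
      rw [div_sub' hN0, div_sub' hN0, div_mul_div_comm, one_div,
        inv_mul_eq_div, div_eq_div_iff (mul_ne_zero hN0 hN0) (pow_ne_zero 2 hN0)]
      ring
    have key2 : ∀ c : ℝ, (1/(N:ℝ)^2) * ((N:ℝ) * p i * c) = p i * c / N := by
      intro c
      rw [one_div, inv_mul_eq_div, div_eq_div_iff (pow_ne_zero 2 hN0) hN0]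
      ring
    have h : Ex r N p (fun β => ((β i:ℝ)/N - p i) * ((β j:ℝ)/N - p j))
        = Ex r N p (fun β => (1/(N:ℝ)^2)
            * (((β i:ℝ) - N * p i) * ((β j:ℝ) - N * p j))) :=
      Ex_congr fun β => key _ _ _ _
    rw [h, Ex_smul, Ecent2 hp1]
    exact key2 _
  have hEF1 : Ex r N p (fun β => fderiv ℝ f p (v β)) = 0 := by
    have h : Ex r N p (fun β => fderiv ℝ f p (v β))
        = Ex r N p (fun β => ∑ i, ((β i:ℝ)/N - p i) * (fderiv ℝ f p (Pi.single i 1))) :=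
      Ex_congr fun β => by
        rw [clm_expand (fderiv ℝ f p) (v β)]
        exact Finset.sum_congr rfl fun i _ => by rw [smul_eq_mul]
    rw [h, Ex_sum]
    refine Finset.sum_eq_zero fun i _ => ?_
    rw [Ex_mul_const, hEv1 i, zero_mul]
  have hEF2 : Ex r N p (fun β => F2 p (v β) (v β))
      = ∑ i, ∑ j, (p i * ((if i = j then (1:ℝ) else 0) - p j) / N)
          * (F2 p (Pi.single i 1) (Pi.single j 1)) := by
    have h : Ex r N p (fun β => F2 p (v β) (v β))
        = Ex r N p (fun β => ∑ i, ∑ j, (((β i:ℝ)/N - p i) * ((β j:ℝ)/N - p j))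
            * (F2 p (Pi.single i 1) (Pi.single j 1))) :=
      Ex_congr fun β => by
        rw [clm2_expand (F2 p) (v β)]
    rw [h, Ex_sum]
    refine Finset.sum_congr rfl fun i _ => ?_
    rw [Ex_sum]
    refine Finset.sum_congr rfl fun j _ => ?_
    rw [Ex_mul_const, hEv2 i j]
  have hExRm : Ex r N p Rm = TOp N f p - f p
      - (1/2) * ∑ i, ∑ j, (p i * ((if i = j then (1:ℝ) else 0) - p j) / N)
          * (F2 p (Pi.single i 1) (Pi.single j 1)) := by
    simp only [hRmdef]
    rw [Ex_add, Ex_add, Ex_add, Ex_smul, Ex_smul, Ex_const hp1, hT, hEF1, hEF2]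
    ring
  have hmain : (N:ℝ) * (TOp N f p - f p) - GB f p = (N:ℝ) * Ex r N p Rm := by
    have hswap : ∑ i, ∑ j, (p i * ((if i = j then (1:ℝ) else 0) - p j) / N)
          * (F2 p (Pi.single i 1) (Pi.single j 1))
        = (1/(N:ℝ)) * ∑ i, ∑ j, p i * ((if i = j then (1:ℝ) else 0) - p j)
          * (F2 p (Pi.single i 1) (Pi.single j 1)) := by
      rw [Finset.mul_sum]
      refine Finset.sum_congr rfl fun i _ => ?_
      rw [Finset.mul_sum]
      refine Finset.sum_congr rfl fun j _ => ?_
      ring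
    rw [hExRm, hGB, hswap]
    have hNinv : (N:ℝ) * (1/(N:ℝ)) = 1 := by field_simp
    set X := ∑ i, ∑ j, p i * ((if i = j then (1:ℝ) else 0) - p j)
      * (F2 p (Pi.single i 1) (Pi.single j 1)) with hXdef
    linear_combination ((1/2) * X) * hNinv
  -- pointwise Taylor bound
  have hRbound : ∀ β ∈ Finset.Nat.antidiagonalTuple r N,
      |Rm β| ≤ (ε/2) * (∑ i, (v β i)^2) + (2*C*(r:ℝ)/δ^2) * (∑ i, (v β i)^4) := by
    intro β hβ
    rw [Finset.Nat.mem_antidiagonalTuple] at hβ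
    have hb01 : ∀ i, 0 ≤ (β i:ℝ)/N ∧ (β i:ℝ)/N ≤ 1 := by
      intro i
      refine ⟨div_nonneg (Nat.cast_nonneg _) hNpos.le, ?_⟩
      have hle : β i ≤ N := hβ ▸ Finset.single_le_sum (f := fun j => β j)
        (fun _ _ => Nat.zero_le _) (Finset.mem_univ i)
      rw [div_le_one hNpos]
      exact_mod_cast hle
    have hmemQ : ∀ t ∈ Set.Icc (0:ℝ) 1, p + t • (v β) ∈ Q := by
      intro t ht
      rw [hQdef, Set.mem_Icc]
      constructor
      · intro i
        have h1 := (hb01 i).1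
        have h2 := hp0 i
        show (0:ℝ) ≤ p i + t * (v β i)
        simp only [hvdef]
        linarith only [mul_nonneg ht.1 h1, mul_nonneg (sub_nonneg.2 ht.2) h2]
      · intro i
        have h1 := (hb01 i).2
        have h2 := hple i
        show p i + t * (v β i) ≤ (1:ℝ)
        simp only [hvdef]
        linarith only [mul_nonneg (sub_nonneg.2 ht.2) (sub_nonneg.2 h2),
          mul_nonneg ht.1 (sub_nonneg.2 h1)]
    set S := ∑ i, (v β i)^2 with hSdef
    have hS0 : 0 ≤ S := Finset.sum_nonneg fun i _ => sq_nonneg _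
    have hnormle : ‖v β‖^2 ≤ S := by
      have h1 : ‖v β‖ ≤ Real.sqrt S := by
        rw [pi_norm_le_iff_of_nonneg (Real.sqrt_nonneg _)]
        intro i
        rw [Real.norm_eq_abs, ← Real.sqrt_sq_eq_abs]
        exact Real.sqrt_le_sqrt (Finset.single_le_sum (f := fun i => (v β i)^2)
          (fun i _ => sq_nonneg _) (Finset.mem_univ i))
      calc ‖v β‖^2 ≤ (Real.sqrt S)^2 :=
            pow_le_pow_left₀ (norm_nonneg _) h1 2
        _ = S := Real.sq_sqrt hS0
    set M : ℝ := ε/2 + (2*C/δ^2) * ‖v β‖^2 with hMdef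
    have hM2nonneg : (0:ℝ) ≤ (2*C/δ^2) * ‖v β‖^2 := by positivity
    have hM : ∀ t ∈ Set.Icc (0:ℝ) 1, ‖F2 (p + t • v β) - F2 p‖ ≤ M := by
      intro t ht
      have hxQ := hmemQ t ht
      have hdist : dist (p + t • v β) p ≤ ‖v β‖ := by
        rw [dist_eq_norm]
        rw [show p + t • v β - p = t • v β from by abel]
        rw [norm_smul]
        calc ‖t‖ * ‖v β‖ ≤ 1 * ‖v β‖ := by
              apply mul_le_mul_of_nonneg_right _ (norm_nonneg _)
              rw [Real.norm_eq_abs, abs_of_nonneg ht.1]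
              exact ht.2
          _ = ‖v β‖ := one_mul _
      by_cases hcase : ‖v β‖ < δ
      · have h := hδ _ hxQ p hpQ (lt_of_le_of_lt hdist hcase)
        rw [dist_eq_norm (F2 (p + t • v β)) (F2 p)] at h
        rw [hMdef]
        linarith only [h, hM2nonneg]
      · push_neg at hcase
        have h2C : ‖F2 (p + t • v β) - F2 p‖ ≤ 2*C := by
          calc ‖F2 (p + t • v β) - F2 p‖ ≤ ‖F2 (p + t • v β)‖ + ‖F2 p‖ := norm_sub_le (F2 (p + t • v β)) (F2 p)
            _ ≤ C + C := add_le_add (hC _ hxQ) (hC _ hpQ)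
            _ = 2*C := by ring
        have hge : 2*C ≤ (2*C/δ^2) * ‖v β‖^2 := by
          have hδ2 : (0:ℝ) < δ^2 := by positivity
          rw [div_mul_eq_mul_div, le_div_iff₀ hδ2]
          have hvv : δ^2 ≤ ‖v β‖^2 := pow_le_pow_left₀ hδ0.le hcase 2
          have h2c : (0:ℝ) ≤ 2*C := by linarith only [hC0]
          linarith only [mul_le_mul_of_nonneg_left hvv h2c]
        rw [hMdef]
        linarith only [h2C, hge, hε]
    have htay := taylor2 hf p (v β) hM
    have hpv : (fun i => (β i:ℝ)/N) = p + v β := by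
      funext i
      simp only [hvdef, Pi.add_apply]
      ring
    have hRmval : Rm β = f (p + v β) - f p - fderiv ℝ f p (v β)
        - (1/2) * (F2 p (v β) (v β)) := by
      simp only [hRmdef]
      rw [hpv]
      ring
    rw [hRmval]
    calc |f (p + v β) - f p - fderiv ℝ f p (v β) - (1/2) * (F2 p (v β) (v β))|
        ≤ M * ‖v β‖^2 := htay
      _ ≤ (ε/2) * S + (2*C*(r:ℝ)/δ^2) * (∑ i, (v β i)^4) := by
        have hS2 : ‖v β‖^2 * ‖v β‖^2 ≤ (r:ℝ) * ∑ i, (v β i)^4 := by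
          calc ‖v β‖^2 * ‖v β‖^2 ≤ S * S :=
                mul_le_mul hnormle hnormle (sq_nonneg _) hS0
            _ = S^2 := (sq S).symm
            _ ≤ (r:ℝ) * ∑ i, ((v β i)^2)^2 := by
                have h := sq_sum_le_card_mul_sum_sq
                  (s := Finset.univ) (f := fun i => (v β i)^2)
                simpa [Finset.card_univ] using h
            _ = (r:ℝ) * ∑ i, (v β i)^4 := by
                congr 1
                exact Finset.sum_congr rfl fun i _ => by ring
        have hC2 : (0:ℝ) ≤ 2*C/δ^2 := by positivity
        rw [hMdef]
        calc (ε/2 + (2*C/δ^2) * ‖v β‖^2) * ‖v β‖^2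
            = (ε/2) * ‖v β‖^2 + (2*C/δ^2) * (‖v β‖^2 * ‖v β‖^2) := by ring
          _ ≤ (ε/2) * S + (2*C/δ^2) * ((r:ℝ) * ∑ i, (v β i)^4) :=
              add_le_add (mul_le_mul_of_nonneg_left hnormle (by linarith only [hε]))
                (mul_le_mul_of_nonneg_left hS2 hC2)
          _ = (ε/2) * S + (2*C*(r:ℝ)/δ^2) * ∑ i, (v β i)^4 := by ring
  -- summing the bound
  have habs : |Ex r N p Rm|
      ≤ Ex r N p (fun β => (ε/2) * (∑ i, (v β i)^2)
          + (2*C*(r:ℝ)/δ^2) * (∑ i, (v β i)^4)) := by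
    unfold WFAux.Ex
    calc |∑ β ∈ Finset.Nat.antidiagonalTuple r N, multinomialWeight p β * Rm β|
        ≤ ∑ β ∈ Finset.Nat.antidiagonalTuple r N, |multinomialWeight p β * Rm β| :=
          Finset.abs_sum_le_sum_abs _ _
      _ ≤ ∑ β ∈ Finset.Nat.antidiagonalTuple r N, multinomialWeight p β
            * ((ε/2) * (∑ i, (v β i)^2) + (2*C*(r:ℝ)/δ^2) * (∑ i, (v β i)^4)) := by
          refine Finset.sum_le_sum fun β hβ => ?_
          rw [abs_mul, abs_of_nonneg (weight_nonneg hp0 β)]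
          exact mul_le_mul_of_nonneg_left (hRbound β hβ) (weight_nonneg hp0 β)
  have hExS2 : Ex r N p (fun β => ∑ i, (v β i)^2) ≤ 1/(N:ℝ) := by
    have hsplit : Ex r N p (fun β => ∑ i, (v β i)^2)
        = ∑ i, Ex r N p (fun β => (v β i)^2) :=
      Ex_sum Finset.univ (fun i β => (v β i)^2)
    rw [hsplit]
    have hterm : ∀ i, Ex r N p (fun β => (v β i)^2) = p i * (1 - p i) / N := by
      intro i
      have h : Ex r N p (fun β => (v β i)^2)
          = Ex r N p (fun β => ((β i:ℝ)/N - p i) * ((β i:ℝ)/N - p i)) :=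
        Ex_congr fun β => by simp only [hvdef]; ring
      rw [h, hEv2 i i]
      simp
    calc ∑ i, Ex r N p (fun β => (v β i)^2) = ∑ i, p i * (1 - p i) / N := by
          exact Finset.sum_congr rfl fun i _ => hterm i
      _ ≤ ∑ i, p i / N := by
          refine Finset.sum_le_sum fun i _ => ?_
          gcongr
          linarith only [mul_nonneg (hp0 i) (hp0 i), sq_nonneg (p i)]
      _ = 1/(N:ℝ) := by rw [← Finset.sum_div, hp1]
  have hExS4 : Ex r N p (fun β => ∑ i, (v β i)^4) ≤ 3*(r:ℝ)/(N:ℝ)^2 := by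
    have hsplit : Ex r N p (fun β => ∑ i, (v β i)^4)
        = ∑ i, Ex r N p (fun β => (v β i)^4) :=
      Ex_sum Finset.univ (fun i β => (v β i)^4)
    rw [hsplit]
    have hterm : ∀ i, Ex r N p (fun β => (v β i)^4) ≤ 3/(N:ℝ)^2 := by
      intro i
      have key4 : ∀ a b : ℝ, (a/(N:ℝ) - b)^4 = (1/(N:ℝ)^4) * (a - N*b)^4 := by
        intro a b
        rw [div_sub' hN0]
        rw [div_pow]
        ring
      have h : Ex r N p (fun β => (v β i)^4)
          = Ex r N p (fun β => (1/(N:ℝ)^4) * ((β i:ℝ) - N * p i)^4) :=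
        Ex_congr fun β => key4 _ _
      rw [h, Ex_smul]
      have hle := Ecent4_le hp1 i N (hp0 i) (hple i)
      have h4 : (0:ℝ) < (N:ℝ)^4 := by positivity
      calc (1/(N:ℝ)^4) * Ex r N p (fun β => ((β i:ℝ) - N * p i)^4)
          ≤ (1/(N:ℝ)^4) * (3 * (N:ℝ)^2) :=
            mul_le_mul_of_nonneg_left hle (by positivity)
        _ = 3/(N:ℝ)^2 := by
            rw [one_div, inv_mul_eq_div, div_eq_div_iff (by positivity) (by positivity)]
            ring
    calc ∑ i, Ex r N p (fun β => (v β i)^4) ≤ ∑ _i : Fin r, 3/(N:ℝ)^2 :=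
          Finset.sum_le_sum fun i _ => hterm i
      _ = 3*(r:ℝ)/(N:ℝ)^2 := by
          rw [Finset.sum_const, Finset.card_univ, Fintype.card_fin, nsmul_eq_mul]
          ring
  have hExBnd : Ex r N p (fun β => (ε/2) * (∑ i, (v β i)^2)
      + (2*C*(r:ℝ)/δ^2) * (∑ i, (v β i)^4))
      ≤ (ε/2) * (1/(N:ℝ)) + (2*C*(r:ℝ)/δ^2) * (3*(r:ℝ)/(N:ℝ)^2) := by
    rw [Ex_add, Ex_smul, Ex_smul]
    have hc2 : (0:ℝ) ≤ 2*C*(r:ℝ)/δ^2 := by positivity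
    exact add_le_add (mul_le_mul_of_nonneg_left hExS2 (by linarith only [hε]))
      (mul_le_mul_of_nonneg_left hExS4 hc2)
  -- final numeric estimate
  have hfinal : (N:ℝ) * ((ε/2) * (1/(N:ℝ)) + (2*C*(r:ℝ)/δ^2) * (3*(r:ℝ)/(N:ℝ)^2))
      = ε/2 + (6*C*(r:ℝ)^2/δ^2)/(N:ℝ) := by
    have e1 : (ε/2) * (1/(N:ℝ)) = (ε/2)/(N:ℝ) := by rw [mul_one_div]
    have e2 : (2*C*(r:ℝ)/δ^2) * (3*(r:ℝ)/(N:ℝ)^2)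
        = (2*C*(r:ℝ)/δ^2*(3*(r:ℝ)))/(N:ℝ)^2 := (mul_div_assoc _ _ _).symm
    have hdivN : ∀ x : ℝ, (N:ℝ) * (x / (N:ℝ)) = x := fun x => by
      rw [mul_comm, div_mul_cancel₀ x hN0]
    have hdivN2 : ∀ x : ℝ, (N:ℝ) * (x / (N:ℝ)^2) = x / N := fun x => by
      rw [pow_two, ← div_div, mul_comm, div_mul_cancel₀ _ hN0]
    rw [e1, e2, mul_add, hdivN, hdivN2]
    have e3 : 2*C*(r:ℝ)/δ^2*(3*(r:ℝ)) = 6*C*(r:ℝ)^2/δ^2 := by ring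
    rw [e3]
  have hratio : (6*C*(r:ℝ)^2/δ^2)/(N:ℝ) < ε/2 := by
    have hN1N : (N₁:ℝ) ≤ (N:ℝ) := by
      have : N₁ ≤ N := le_trans (Nat.le_succ N₁) hNge
      exact_mod_cast this
    have h1 : (6*C*(r:ℝ)^2/δ^2) / (ε/2) < (N:ℝ) := lt_of_lt_of_le hN₁ hN1N
    rw [div_lt_iff₀ hNpos]
    calc 6*C*(r:ℝ)^2/δ^2 = ((6*C*(r:ℝ)^2/δ^2) / (ε/2)) * (ε/2) := by
          rw [div_mul_cancel₀]
          exact ne_of_gt (by linarith)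
      _ < (N:ℝ) * (ε/2) := by
          apply mul_lt_mul_of_pos_right h1 (by linarith)
      _ = ε/2 * (N:ℝ) := by ring
  rw [hmain]
  rw [abs_mul, abs_of_pos hNpos]
  calc (N:ℝ) * |Ex r N p Rm|
      ≤ (N:ℝ) * ((ε/2) * (1/(N:ℝ)) + (2*C*(r:ℝ)/δ^2) * (3*(r:ℝ)/(N:ℝ)^2)) := by
        apply mul_le_mul_of_nonneg_left _ hNpos.le
        exact le_trans habs hExBnd
    _ = ε/2 + (6*C*(r:ℝ)^2/δ^2)/(N:ℝ) := hfinal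
    _ < ε/2 + ε/2 := add_lt_add_right hratio _
    _ = ε := by ring
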